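/- In the tight-example construction for GEN with parameter k: graph G contains s, t, gate vertices g_1,...,g_k with edges (s,g_i), vertices o_1, o_2 with edges (o_j,t), and for each i, 2^{i−1} internally disjoint length-2 paths from g_i to each of o_1 and o_2 (unit lengths). Then {o_1, o_2} is a feasible 5-pseudocut of size 2 (removing o_1,o_2 makes d(s,t) = ∞ > 5), while in the uncovered-paths greedy order the vertex g_k covers 2·2^{k−1} paths of length ≤ 5, strictly more than any o_j covers (2^k − 1 < 2^k), so greedy first picks g_k; inductively greedy selects g_k, g_{k−1}, ..., g_1, returning a solution of size k = Ω(log n) times optimal. -/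

import Mathlib

def pathWeight {V : Type*} (w : V → V → ℝ) (p : List V) : ℝ :=
  ((p.zip p.tail).map fun q => w q.1 q.2).sum

def IsPath {V : Type*} (E : V → V → Prop) (s t : V) (p : List V) : Prop :=
  p ≠ [] ∧ p.head? = some s ∧ p.getLast? = some t ∧ p.Chain' E ∧ p.Nodup

/-- Vertices of the tight example: `s`, `t`, gates `g₁,…,g_k`, vertices `o₁,o₂`,
and for gate `g i` (0-indexed, so `2^i` paths to each `o j`) the middle vertices of
the internally disjoint length-2 connections. -/
inductive TightV (k : ℕ) where
  | s : TightV k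
  | t : TightV k
  | g (i : Fin k) : TightV k
  | o (j : Fin 2) : TightV k
  | mid (i : Fin k) (j : Fin 2) (c : Fin (2 ^ (i : ℕ))) : TightV k

/-- Edges of the tight example (unit lengths): `s → g i → mid i j c → o j → t`. -/
def TE {k : ℕ} : TightV k → TightV k → Prop
  | .s, .g _ => True
  | .g i, .mid i' _ _ => i = i'
  | .mid _ j _, .o j' => j = j'
  | .o _, .t => True
  | _, _ => False

abbrev I (k : ℕ) := Σ i : Fin k, Fin 2 × Fin (2 ^ (i : ℕ))

def mk' {k : ℕ} (x : I k) : List (TightV k) :=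
  [.s, .g x.1, .mid x.1 x.2.1 x.2.2, .o x.2.1, .t]

lemma mk_inj {k : ℕ} : Function.Injective (mk' (k := k)) := by
  rintro ⟨i, j, c⟩ ⟨i', j', c'⟩ h
  simp only [mk', List.cons.injEq, TightV.g.injEq, TightV.mid.injEq, TightV.o.injEq,
    and_true] at h
  obtain ⟨-, rfl, ⟨-, rfl, hc⟩, -⟩ := h
  cases eq_of_heq hc
  rfl

lemma te_s {k : ℕ} {b : TightV k} (h : TE .s b) : ∃ i, b = .g i := by
  cases b <;> simp_all [TE]
lemma te_g {k : ℕ} {i : Fin k} {b : TightV k} (h : TE (.g i) b) :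
    ∃ j c, b = .mid i j c := by
  cases b with
  | mid i' j c => simp only [TE] at h; subst h; exact ⟨j, c, rfl⟩
  | _ => simp [TE] at h
lemma te_mid {k : ℕ} {i : Fin k} {j : Fin 2} {c : Fin (2 ^ (i:ℕ))} {b : TightV k}
    (h : TE (.mid i j c) b) : b = .o j := by
  cases b <;> simp_all [TE]
lemma te_o {k : ℕ} {j : Fin 2} {b : TightV k} (h : TE (.o j) b) : b = .t := by
  cases b <;> simp_all [TE]
lemma te_t {k : ℕ} {b : TightV k} (h : TE .t b) : False := by
  cases b <;> simp_all [TE]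

lemma path_struct {k : ℕ} {q : List (TightV k)} (h : IsPath TE .s .t q) :
    ∃ x : I k, q = mk' x := by
  obtain ⟨hne, hh, hl, hc, hn⟩ := h
  rcases q with _ | ⟨a, q⟩; · simp at hh
  simp only [List.head?_cons, Option.some.injEq] at hh; subst hh
  rcases q with _ | ⟨b, q⟩; · simp at hl
  rw [List.Chain', List.isChain_cons_cons] at hc
  obtain ⟨i, rfl⟩ := te_s hc.1
  rcases q with _ | ⟨c, q⟩; · simp at hl
  rw [List.isChain_cons_cons] at hc
  obtain ⟨j, cc, rfl⟩ := te_g hc.2.1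
  rcases q with _ | ⟨d, q⟩; · simp at hl
  rw [List.isChain_cons_cons] at hc
  obtain rfl := te_mid hc.2.2.1
  rcases q with _ | ⟨e, q⟩; · simp at hl
  rw [List.isChain_cons_cons] at hc
  obtain rfl := te_o hc.2.2.2.1
  rcases q with _ | ⟨f, q⟩
  · exact ⟨⟨i, j, cc⟩, rfl⟩
  · rw [List.isChain_cons_cons] at hc
    exact absurd (te_t hc.2.2.2.2.1) (fun h => h)

/-- Number of uncovered (by `W`) s-t paths of length ≤ 5 containing vertex `v`. -/
noncomputable def cnt (k : ℕ) (W : Set (TightV k)) (v : TightV k) : ℕ :=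
  {q : List (TightV k) | IsPath TE TightV.s TightV.t q ∧
    pathWeight (fun _ _ => (1 : ℝ)) q ≤ 5 ∧ (∀ x ∈ W, x ∉ q) ∧ v ∈ q}.ncard

lemma mk_isPath {k : ℕ} (x : I k) : IsPath TE TightV.s TightV.t (mk' x) := by
  refine ⟨by simp [mk'], rfl, rfl, ?_, ?_⟩ <;> simp [mk', TE, List.Chain', List.isChain_cons_cons]

lemma mk_weight {k : ℕ} (x : I k) :
    pathWeight (fun _ _ => (1 : ℝ)) (mk' x) = 4 := by
  simp [pathWeight, mk']
  norm_num

lemma cnt_formula (k : ℕ) (W : Set (TightV k)) (v : TightV k) :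
    cnt k W v = Nat.card {x : I k // (∀ w ∈ W, w ∉ mk' x) ∧ v ∈ mk' x} := by
  have hset : {q : List (TightV k) | IsPath TE TightV.s TightV.t q ∧
      pathWeight (fun _ _ => (1 : ℝ)) q ≤ 5 ∧ (∀ x ∈ W, x ∉ q) ∧ v ∈ q}
      = mk' '' {x : I k | (∀ w ∈ W, w ∉ mk' x) ∧ v ∈ mk' x} := by
    ext q
    constructor
    · rintro ⟨hp, -, hW, hv⟩
      obtain ⟨x, rfl⟩ := path_struct hp
      exact ⟨x, ⟨hW, hv⟩, rfl⟩
    · rintro ⟨x, ⟨hW, hv⟩, rfl⟩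
      exact ⟨mk_isPath x, by rw [mk_weight]; norm_num, hW, hv⟩
  rw [cnt, hset, Set.ncard_image_of_injective _ mk_inj, ← Nat.card_coe_set_eq]
  rfl

lemma mem_mk_g {k : ℕ} {i : Fin k} {x : I k} : TightV.g i ∈ mk' x ↔ x.1 = i := by
  simp [mk', eq_comm]

lemma mem_mk_o {k : ℕ} {j : Fin 2} {x : I k} : TightV.o j ∈ mk' x ↔ x.2.1 = j := by
  simp [mk', eq_comm]

lemma mem_mk_mid {k : ℕ} {i : Fin k} {j : Fin 2} {c : Fin (2 ^ (i : ℕ))} {x : I k} :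
    TightV.mid i j c ∈ mk' x ↔ x = ⟨i, j, c⟩ := by
  rcases x with ⟨i', j', c'⟩
  simp only [mk', List.mem_cons, List.not_mem_nil, or_false, TightV.mid.injEq,
    reduceCtorEq, false_or]
  constructor
  · rintro ⟨rfl, rfl, hc⟩
    cases eq_of_heq hc
    rfl
  · rintro h
    cases h
    exact ⟨rfl, rfl, HEq.rfl⟩

lemma card_g {k B : ℕ} (i : Fin k) (hiB : (i : ℕ) < B) :
    Nat.card {x : I k // (x.1 : ℕ) < B ∧ x.1 = i} = 2 ^ ((i : ℕ) + 1) := by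
  have e : (Fin 2 × Fin (2 ^ (i : ℕ))) ≃ {x : I k // (x.1 : ℕ) < B ∧ x.1 = i} := by
    refine Equiv.ofBijective (fun jc => ⟨⟨i, jc⟩, hiB, rfl⟩) ⟨?_, ?_⟩
    · intro a b h
      simpa using h
    · rintro ⟨⟨i', jc⟩, hB, rfl⟩
      exact ⟨jc, rfl⟩
  rw [← Nat.card_congr e, Nat.card_eq_fintype_card]
  simp [pow_succ, mul_comm]

lemma card_g_zero {k B : ℕ} (i : Fin k) (hiB : ¬ (i : ℕ) < B) :
    Nat.card {x : I k // (x.1 : ℕ) < B ∧ x.1 = i} = 0 := by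
  have : IsEmpty {x : I k // (x.1 : ℕ) < B ∧ x.1 = i} := by
    constructor
    rintro ⟨⟨i', jc⟩, hB, rfl⟩
    exact hiB hB
  exact Nat.card_of_isEmpty

lemma sum_two_pow (B : ℕ) : ∑ i ∈ Finset.range B, 2 ^ i = 2 ^ B - 1 := by
  induction B with
  | zero => rfl
  | succ n ih =>
    rw [Finset.sum_range_succ, ih, pow_succ]
    have := Nat.one_le_two_pow (n := n)
    omega

lemma card_o {k B : ℕ} (hBk : B ≤ k) (j : Fin 2) :
    Nat.card {x : I k // (x.1 : ℕ) < B ∧ x.2.1 = j} = 2 ^ B - 1 := by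
  have e : (Σ i : Fin B, Fin (2 ^ (i : ℕ))) ≃ {x : I k // (x.1 : ℕ) < B ∧ x.2.1 = j} := by
    refine Equiv.ofBijective
      (fun y => ⟨⟨⟨y.1.1, lt_of_lt_of_le y.1.2 hBk⟩, j, y.2⟩, y.1.2, rfl⟩) ⟨?_, ?_⟩
    · rintro ⟨⟨a, ha⟩, ca⟩ ⟨⟨b, hb⟩, cb⟩ h
      simp only [Subtype.mk.injEq] at h
      obtain ⟨h1, h2⟩ := Sigma.mk.inj_iff.mp h
      obtain rfl : a = b := Fin.mk.inj_iff.mp h1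
      cases eq_of_heq h2
      rfl
    · rintro ⟨⟨i', j', c⟩, hB, rfl⟩
      exact ⟨⟨⟨i'.1, hB⟩, c⟩, rfl⟩
  rw [← Nat.card_congr e, Nat.card_eq_fintype_card, Fintype.card_sigma]
  simp only [Fintype.card_fin]
  rw [Fin.sum_univ_eq_sum_range (fun i => 2 ^ i), sum_two_pow]

lemma card_mid {k B : ℕ} (x0 : I k) (h : (x0.1 : ℕ) < B) :
    Nat.card {x : I k // (x.1 : ℕ) < B ∧ x = x0} = 1 := by
  have e : Unit ≃ {x : I k // (x.1 : ℕ) < B ∧ x = x0} := by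
    refine Equiv.ofBijective (fun _ => ⟨x0, h, rfl⟩) ⟨fun a b _ => rfl, ?_⟩
    rintro ⟨x, hB, rfl⟩
    exact ⟨(), rfl⟩
  rw [← Nat.card_congr e]
  simp

lemma card_mid_zero {k B : ℕ} (x0 : I k) (h : ¬ (x0.1 : ℕ) < B) :
    Nat.card {x : I k // (x.1 : ℕ) < B ∧ x = x0} = 0 := by
  have : IsEmpty {x : I k // (x.1 : ℕ) < B ∧ x = x0} := by
    constructor
    rintro ⟨x, hB, rfl⟩
    exact h hB
  exact Nat.card_of_isEmpty

lemma cnt_empty_g {k : ℕ} (i : Fin k) : cnt k ∅ (TightV.g i) = 2 ^ ((i : ℕ) + 1) := by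
  rw [cnt_formula, Nat.card_congr (Equiv.subtypeEquivRight
    (q := fun x : I k => (x.1 : ℕ) < k ∧ x.1 = i)
    (fun x => by simp [mem_mk_g, x.1.isLt]))]
  exact card_g i i.isLt

lemma cnt_empty_o {k : ℕ} (j : Fin 2) : cnt k ∅ (TightV.o j) = 2 ^ k - 1 := by
  rw [cnt_formula, Nat.card_congr (Equiv.subtypeEquivRight
    (q := fun x : I k => (x.1 : ℕ) < k ∧ x.2.1 = j)
    (fun x => by simp [mem_mk_o, x.1.isLt]))]
  exact card_o le_rfl j

lemma avoid_W {k m : ℕ} (x : I k) :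
    (∀ w ∈ {y | ∃ i : Fin k, y = TightV.g i ∧ k - m ≤ (i : ℕ)}, w ∉ mk' x)
      ↔ (x.1 : ℕ) < k - m := by
  constructor
  · intro h
    by_contra hc
    push_neg at hc
    exact h (TightV.g x.1) ⟨x.1, rfl, hc⟩ (mem_mk_g.mpr rfl)
  · rintro h w ⟨i, rfl, hi⟩ hmem
    rw [mem_mk_g] at hmem
    have : (x.1 : ℕ) = i := by rw [hmem]
    omega

lemma cnt_W {k m : ℕ} (v : TightV k) :
    cnt k {y | ∃ i : Fin k, y = TightV.g i ∧ k - m ≤ (i : ℕ)} v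
      = Nat.card {x : I k // (x.1 : ℕ) < k - m ∧ v ∈ mk' x} := by
  rw [cnt_formula]
  exact Nat.card_congr (Equiv.subtypeEquivRight (fun x => by rw [avoid_W]))


/-- in the tight example for GEN with parameter `k` and `T = 5`:
`{o₁,o₂}` is a feasible 5-pseudocut of size 2 (after its removal no s-t path
remains, vacuously all remaining paths are longer than 5); gate `g i` lies on
`2^{i+1}` short s-t paths while `o j` lies on `2^k − 1 < 2^k` of them; at each
greedy step `m < k`, after the gates `g_{k-1},…,g_{k-m}` have been selected, the
gate `g_{k-1-m}` covers strictly more uncovered short paths than any other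
selectable vertex, so greedy selects `g_{k-1},…,g₀`, a solution of size `k`; every
short s-t path goes through some gate (so greedy stops after the `k` gates); and
`k ≥ log₂ n − 3` where `n = k + 4 + 2(2^k − 1)` is the number of vertices, so the
greedy solution is `Ω(log n)` times the optimal size 2. -/
theorem stmt17 (k : ℕ) (hk : 1 ≤ k) :
    (∀ q : List (TightV k),
        IsPath (fun a b => TE a b ∧ (∀ j, a ≠ TightV.o j) ∧ (∀ j, b ≠ TightV.o j))
          TightV.s TightV.t q →
        (5 : ℝ) < pathWeight (fun _ _ => (1 : ℝ)) q)
    ∧ (∀ i : Fin k, cnt k ∅ (TightV.g i) = 2 ^ ((i : ℕ) + 1))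
    ∧ (∀ j : Fin 2, cnt k ∅ (TightV.o j) = 2 ^ k - 1)
    ∧ (∀ m : ℕ, ∀ hm : m < k, ∀ v : TightV k,
        v ≠ TightV.s → v ≠ TightV.t → v ≠ TightV.g ⟨k - 1 - m, by omega⟩ →
        cnt k {x | ∃ i : Fin k, x = TightV.g i ∧ k - m ≤ (i : ℕ)} v
          < cnt k {x | ∃ i : Fin k, x = TightV.g i ∧ k - m ≤ (i : ℕ)}
              (TightV.g ⟨k - 1 - m, by omega⟩))
    ∧ (∀ q : List (TightV k), IsPath TE TightV.s TightV.t q →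
        pathWeight (fun _ _ => (1 : ℝ)) q ≤ 5 → ∃ i : Fin k, TightV.g i ∈ q)
    ∧ (k : ℝ) ≥ Real.logb 2 ((k : ℝ) + 4 + 2 * (2 ^ k - 1)) - 3 := by
  refine ⟨?_, cnt_empty_g, cnt_empty_o, ?_, ?_, ?_⟩
  · -- part 1
    intro q hq
    exfalso
    obtain ⟨hne, hh, hl, hc, hn⟩ := hq
    obtain ⟨x, rfl⟩ := path_struct ⟨hne, hh, hl, hc.imp (fun _ _ h => h.1), hn⟩
    simp only [mk', List.Chain', List.isChain_cons_cons] at hc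
    exact hc.2.2.1.2.2 x.2.1 rfl
  · -- part 4
    intro m hm v hvs hvt hvg
    have hB1 : 1 ≤ k - m := by omega
    have htgt : cnt k {x | ∃ i : Fin k, x = TightV.g i ∧ k - m ≤ (i : ℕ)}
        (TightV.g ⟨k - 1 - m, by omega⟩) = 2 ^ (k - m) := by
      rw [cnt_W, Nat.card_congr (Equiv.subtypeEquivRight
        (q := fun x : I k => (x.1 : ℕ) < k - m ∧ x.1 = ⟨k - 1 - m, by omega⟩)
        (fun x => by rw [mem_mk_g]))]
      rw [card_g _ (by simp; omega)]
      congr 1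
      simp
      omega
    rw [htgt, cnt_W]
    cases v with
    | s => exact absurd rfl hvs
    | t => exact absurd rfl hvt
    | g i =>
      have hne : (i : ℕ) ≠ k - 1 - m := by
        intro h
        exact hvg (by congr 1; exact Fin.ext h)
      rw [Nat.card_congr (Equiv.subtypeEquivRight
        (q := fun x : I k => (x.1 : ℕ) < k - m ∧ x.1 = i)
        (fun x => by rw [mem_mk_g]))]
      by_cases hiB : (i : ℕ) < k - m
      · rw [card_g i hiB]
        exact Nat.pow_lt_pow_right one_lt_two (by omega)
      · rw [card_g_zero i hiB]
        exact Nat.two_pow_pos _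
    | o j =>
      rw [Nat.card_congr (Equiv.subtypeEquivRight
        (q := fun x : I k => (x.1 : ℕ) < k - m ∧ x.2.1 = j)
        (fun x => by rw [mem_mk_o])), card_o (by omega) j]
      have := Nat.two_pow_pos (k - m)
      omega
    | mid i j c =>
      rw [Nat.card_congr (Equiv.subtypeEquivRight
        (q := fun x : I k => (x.1 : ℕ) < k - m ∧ x = ⟨i, j, c⟩)
        (fun x => by rw [mem_mk_mid]))]
      have h2 : 2 ≤ 2 ^ (k - m) := by
        calc 2 = 2 ^ 1 := rfl
        _ ≤ 2 ^ (k - m) := Nat.pow_le_pow_right (by norm_num) hB1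
      by_cases hiB : (i : ℕ) < k - m
      · rw [card_mid _ hiB]; omega
      · rw [card_mid_zero _ hiB]; omega
  · -- part 5
    intro q hq _
    obtain ⟨x, rfl⟩ := path_struct hq
    exact ⟨x.1, by simp [mk']⟩
  · -- part 6
    have h1 : (1 : ℝ) ≤ 2 ^ k := one_le_pow₀ (by norm_num)
    have hk2 : (k : ℝ) + 1 ≤ 2 ^ k := by
      exact_mod_cast Nat.succ_le_of_lt (Nat.lt_two_pow_self (n := k))
    have hx : (0 : ℝ) < (k : ℝ) + 4 + 2 * (2 ^ k - 1) := by
      have : (0 : ℝ) ≤ (k : ℝ) := Nat.cast_nonneg k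
      nlinarith
    have hub : (k : ℝ) + 4 + 2 * (2 ^ k - 1) ≤ 2 ^ (k + 3) := by
      have : (2 : ℝ) ^ (k + 3) = 2 ^ k * 8 := by ring
      nlinarith
    have hle := Real.logb_le_logb_of_le (one_lt_two) hx hub
    rw [ge_iff_le, sub_le_iff_le_add]
    calc Real.logb 2 ((k : ℝ) + 4 + 2 * (2 ^ k - 1)) ≤ Real.logb 2 (2 ^ (k + 3)) := hle
    _ = (k + 3 : ℕ) * Real.logb 2 2 := Real.logb_pow 2 2 (k + 3)
    _ = (k : ℝ) + 3 := by rw [Real.logb_self_eq_one (by norm_num)]; push_cast; ring
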